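/- Let G be a graph with maximum degree at most Δ ≥ 1 and let x be a vertex of G. For every n ≥ 1, the number of connected subgraphs of G with exactly n edges that contain the vertex x is at most (eΔ)^n / 2. -/

import Mathlib

open Real

set_option linter.unusedSectionVars false
open Finset
section
variable {V : Type*} [Fintype V] [DecidableEq V] [LinearOrder V]
variable (G : SimpleGraph V) [DecidableRel G.Adj]

def newDarts (v u : V) : List (V × V) :=
  (((G.neighborFinset v).erase u).sort (· ≤ ·)).map (fun w => (v, w))

def touched (x : V) (acc : Finset (Sym2 V)) : Finset V :=
  insert x (Finset.univ.filter fun v => ∃ e ∈ acc, v ∈ e)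

def bStep (A : Finset (Sym2 V)) (x : V) :
    List (V × V) × Finset (Sym2 V) → List (V × V) × Finset (Sym2 V)
  | ([], acc) => ([], acc)
  | ((u, v) :: Q, acc) =>
      if s(u,v) ∈ A ∧ s(u,v) ∉ acc then
        if v ∈ touched x acc then (Q, insert s(u,v) acc)
        else (Q ++ newDarts G v u, insert s(u,v) acc)
      else (Q, acc)

def bRun (A : Finset (Sym2 V)) (x : V) (t : ℕ) : List (V × V) × Finset (Sym2 V) :=
  (bStep G A x)^[t] (((G.neighborFinset x).sort (· ≤ ·)).map (fun w => (x, w)), ∅)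

variable {G}

lemma mem_touched_of_mem {x : V} {acc : Finset (Sym2 V)} {e : Sym2 V} (h : e ∈ acc)
    {a : V} (ha : a ∈ e) : a ∈ touched x acc := by
  simp only [touched, mem_insert, mem_filter, mem_univ, true_and]
  exact Or.inr ⟨e, h, ha⟩

lemma touched_mono {x : V} {acc acc' : Finset (Sym2 V)} (h : acc ⊆ acc') :
    touched x acc ⊆ touched x acc' := by
  intro a ha
  simp only [touched, mem_insert, mem_filter, mem_univ, true_and] at ha ⊢
  rcases ha with h' | ⟨e, he, hae⟩
  · exact Or.inl h'
  · exact Or.inr ⟨e, h he, hae⟩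

lemma mem_touched_insert {x u v : V} {acc : Finset (Sym2 V)} {a : V}
    (h : a ∈ touched x (insert s(u,v) acc)) : a ∈ touched x acc ∨ a = u ∨ a = v := by
  simp only [touched, mem_insert, mem_filter, mem_univ, true_and] at h ⊢
  rcases h with h' | ⟨e, he, hae⟩
  · exact Or.inl (Or.inl h')
  · rcases he with rfl | he
    · rcases Sym2.mem_iff.1 hae with rfl | rfl
      · exact Or.inr (Or.inl rfl)
      · exact Or.inr (Or.inr rfl)
    · exact Or.inl (Or.inr ⟨e, he, hae⟩)

lemma witness_lift {a w u v : V} {Q Q' : List (V × V)} {acc acc' : Finset (Sym2 V)}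
    (hQ' : ∀ d ∈ Q, d ∈ Q') (hacc : acc ⊆ acc')
    (huv : s(a,w) = s(u,v) → s(a,w) ∈ acc')
    (h : s(a,w) ∈ acc ∨ (a,w) ∈ (u,v) :: Q ∨ (w,a) ∈ (u,v) :: Q) :
    s(a,w) ∈ acc' ∨ (a,w) ∈ Q' ∨ (w,a) ∈ Q' := by
  rcases h with h | h | h
  · exact Or.inl (hacc h)
  · rcases List.mem_cons.1 h with h | h
    · refine Or.inl (huv ?_)
      have h1 : a = u := congrArg Prod.fst h
      have h2 : w = v := congrArg Prod.snd h
      rw [h1, h2]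
    · exact Or.inr (Or.inl (hQ' _ h))
  · rcases List.mem_cons.1 h with h | h
    · refine Or.inl (huv ?_)
      have h1 : w = u := congrArg Prod.fst h
      have h2 : a = v := congrArg Prod.snd h
      rw [h1, h2, Sym2.eq_swap]
    · exact Or.inr (Or.inr (hQ' _ h))

lemma bRun_succ (A : Finset (Sym2 V)) (x : V) (t : ℕ) :
    bRun G A x (t + 1) = bStep G A x (bRun G A x t) :=
  Function.iterate_succ_apply' _ _ _

/-- The master invariant. -/
def bInv (G : SimpleGraph V) [DecidableRel G.Adj] (A : Finset (Sym2 V)) (x : V) (Δ t : ℕ)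
    (σ : List (V × V) × Finset (Sym2 V)) : Prop :=
  σ.2 ⊆ A ∧
  (∀ d ∈ σ.1, G.Adj d.1 d.2 ∧ d.1 ∈ touched x σ.2) ∧
  (∀ a ∈ touched x σ.2, ∀ w, G.Adj a w → s(a,w) ∈ A →
      s(a,w) ∈ σ.2 ∨ (a,w) ∈ σ.1 ∨ (w,a) ∈ σ.1) ∧
  (σ.1 ≠ [] → σ.1.length + t ≤ Δ + σ.2.card * (Δ - 1))

theorem bInv_run (A : Finset (Sym2 V)) (x : V) (Δ : ℕ)
    (hdeg : ∀ v, G.degree v ≤ Δ) (t : ℕ) : bInv G A x Δ t (bRun G A x t) := by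
  induction t with
  | zero =>
    refine ⟨by simp [bRun], ?_, ?_, ?_⟩
    · intro d hd
      simp only [bRun, Function.iterate_zero, id, List.mem_map] at hd ⊢
      obtain ⟨w, hw, rfl⟩ := hd
      rw [Finset.mem_sort] at hw
      exact ⟨(G.mem_neighborFinset x w).1 hw, by simp [bRun, touched]⟩
    · intro a ha w hadj hA
      simp only [bRun, Function.iterate_zero, id] at ha ⊢
      have hax : a = x := by
        simp only [touched, mem_insert, mem_filter, mem_univ, true_and] at ha
        rcases ha with h | ⟨e, he, _⟩
        · exact h
        · simp at he
      subst hax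
      refine Or.inr (Or.inl ?_)
      simp only [List.mem_map]
      exact ⟨w, by rw [Finset.mem_sort]; exact (G.mem_neighborFinset a w).2 hadj, rfl⟩
    · intro _
      simp only [bRun, Function.iterate_zero, id, List.length_map, Finset.length_sort]
      simpa using hdeg x
  | succ t ih =>
    obtain ⟨hsub, hadjQ, hJ, hcount⟩ := ih
    rw [bRun_succ]
    rcases hQ : (bRun G A x t).1 with _ | ⟨⟨u, v⟩, Q⟩
    · -- empty queue: state frozen
      have hfr : bStep G A x (bRun G A x t) = ([], (bRun G A x t).2) := by
        have h2 : bRun G A x t = ([], (bRun G A x t).2) := by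
          cases h : bRun G A x t; simp_all
        rw [h2]; rfl
      rw [hfr]
      refine ⟨hsub, by simp, ?_, by simp⟩
      intro a ha w hadj hA
      rcases hJ a ha w hadj hA with h | h | h
      · exact Or.inl h
      · rw [hQ] at h; simp at h
      · rw [hQ] at h; simp at h
    · have hstate : bRun G A x t = ((u, v) :: Q, (bRun G A x t).2) := by
        cases h : bRun G A x t; simp_all
      set acc := (bRun G A x t).2 with hacc
      have hadjuv : G.Adj u v ∧ u ∈ touched x acc := hadjQ (u, v) (by rw [hQ]; simp)
      have hcQ := hcount (by rw [hQ]; simp)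
      rw [hQ] at hcQ
      simp only [List.length_cons] at hcQ
      rw [hstate]
      by_cases hc1 : s(u,v) ∈ A ∧ s(u,v) ∉ acc
      · -- accept
        have hcard : (insert s(u,v) acc).card = acc.card + 1 :=
          Finset.card_insert_of_notMem hc1.2
        have hsub' : insert s(u,v) acc ⊆ A := Finset.insert_subset hc1.1 hsub
        have htsub : touched x acc ⊆ touched x (insert s(u,v) acc) :=
          touched_mono (Finset.subset_insert _ _)
        have hvv_t : v ∈ touched x (insert s(u,v) acc) :=
          mem_touched_of_mem (Finset.mem_insert_self _ _) (Sym2.mem_mk_right u v)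
        have hrhs : (acc.card + 1) * (Δ - 1) = acc.card * (Δ - 1) + (Δ - 1) := by ring
        by_cases hc2 : v ∈ touched x acc
        · simp only [bStep, if_pos hc1, if_pos hc2]
          refine ⟨hsub', ?_, ?_, ?_⟩
          · intro d hd
            have := hadjQ d (by rw [hQ]; exact List.mem_cons_of_mem _ hd)
            exact ⟨this.1, htsub this.2⟩
          · intro a ha w hadj hA
            have ha' : a ∈ touched x acc := by
              rcases mem_touched_insert ha with h | h | h
              · exact h
              · exact h ▸ hadjuv.2
              · exact h ▸ hc2
            refine witness_lift (fun d hd => hd) (Finset.subset_insert _ _)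
              (fun he => he ▸ Finset.mem_insert_self _ _) ?_
            have := hJ a ha' w hadj hA
            rw [hQ] at this
            exact this
          · intro _
            show Q.length + (t + 1) ≤ Δ + (insert s(u,v) acc).card * (Δ - 1)
            rw [hcard, hrhs]
            omega
        · simp only [bStep, if_pos hc1, if_neg hc2]
          refine ⟨hsub', ?_, ?_, ?_⟩
          · intro d hd
            rcases List.mem_append.1 hd with hd | hd
            · have := hadjQ d (by rw [hQ]; exact List.mem_cons_of_mem _ hd)
              exact ⟨this.1, htsub this.2⟩
            · simp only [newDarts, List.mem_map, Finset.mem_sort] at hd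
              obtain ⟨w, hw, rfl⟩ := hd
              have hw' := Finset.mem_erase.1 hw
              exact ⟨(G.mem_neighborFinset v w).1 hw'.2, hvv_t⟩
          · intro a ha w hadj hA
            rcases mem_touched_insert ha with h | h | h
            · refine witness_lift (fun d hd => List.mem_append_left _ hd)
                (Finset.subset_insert _ _)
                (fun he => he ▸ Finset.mem_insert_self _ _) ?_
              have := hJ a h w hadj hA
              rw [hQ] at this
              exact this
            · refine witness_lift (fun d hd => List.mem_append_left _ hd)
                (Finset.subset_insert _ _)
                (fun he => he ▸ Finset.mem_insert_self _ _) ?_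
              have := hJ a (h ▸ hadjuv.2) w hadj hA
              rw [hQ] at this
              exact this
            · -- a = v : newly discovered vertex
              subst h
              by_cases hwu : w = u
              · subst hwu
                refine Or.inl ?_
                rw [Sym2.eq_swap]
                exact Finset.mem_insert_self _ _
              · refine Or.inr (Or.inl (List.mem_append_right _ ?_))
                simp only [newDarts, List.mem_map, Finset.mem_sort]
                exact ⟨w, Finset.mem_erase.2 ⟨hwu, (G.mem_neighborFinset a w).2 hadj⟩, rfl⟩
          · intro _
            show (Q ++ newDarts G v u).length + (t + 1) ≤
              Δ + (insert s(u,v) acc).card * (Δ - 1)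
            rw [List.length_append, hcard, hrhs]
            have hlen : (newDarts G v u).length ≤ Δ - 1 := by
              simp only [newDarts, List.length_map, Finset.length_sort]
              calc ((G.neighborFinset v).erase u).card
                  = (G.neighborFinset v).card - 1 := by
                    rw [Finset.card_erase_of_mem
                      ((G.mem_neighborFinset v u).2 hadjuv.1.symm)]
                _ ≤ Δ - 1 := Nat.sub_le_sub_right (by simpa using hdeg v) 1
            omega
      · -- reject
        simp only [bStep, if_neg hc1]
        refine ⟨hsub, ?_, ?_, ?_⟩
        · intro d hd
          exact hadjQ d (by rw [hQ]; exact List.mem_cons_of_mem _ hd)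
        · intro a ha w hadj hA
          refine witness_lift (u := u) (v := v) (fun d hd => hd) (Finset.Subset.refl _) ?_ ?_
          · intro he
            have hA' : s(u,v) ∈ A := he ▸ hA
            have : s(u,v) ∈ acc := by
              by_contra hn
              exact hc1 ⟨hA', hn⟩
            exact he ▸ this
          · have := hJ a ha w hadj hA
            rw [hQ] at this
            exact this
        · intro _
          show Q.length + (t + 1) ≤ Δ + acc.card * (Δ - 1)
          omega

lemma bRun_frozen {A : Finset (Sym2 V)} {x : V} {t : ℕ}
    (h : (bRun G A x t).1 = []) (k : ℕ) : bRun G A x (t + k) = bRun G A x t := by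
  induction k with
  | zero => rfl
  | succ k ih =>
    rw [← Nat.add_assoc, bRun_succ, ih]
    have h2 : bRun G A x t = ([], (bRun G A x t).2) := by
      cases hh : bRun G A x t; simp_all
    rw [h2]
    rfl

/-- at each step, either the accepted set is unchanged, or it gains exactly one new
element of `A`, and in the latter case the queue was nonempty with head condition. -/
lemma bRun_acc_cases (A : Finset (Sym2 V)) (x : V) (t : ℕ) :
    (bRun G A x (t+1)).2 = (bRun G A x t).2 ∨
    ((bRun G A x (t+1)).2.card = (bRun G A x t).2.card + 1 ∧
      (bRun G A x t).1 ≠ [] ∧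
      ∃ u v Q, (bRun G A x t).1 = (u,v) :: Q ∧ s(u,v) ∈ A ∧ s(u,v) ∉ (bRun G A x t).2) := by
  rw [bRun_succ]
  rcases hQ : (bRun G A x t).1 with _ | ⟨⟨u, v⟩, Q⟩
  · left
    have h2 : bRun G A x t = ([], (bRun G A x t).2) := by
      cases hh : bRun G A x t; simp_all
    rw [h2]; rfl
  · have hstate : bRun G A x t = ((u, v) :: Q, (bRun G A x t).2) := by
      cases hh : bRun G A x t; simp_all
    by_cases hc1 : s(u,v) ∈ A ∧ s(u,v) ∉ (bRun G A x t).2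
    · right
      refine ⟨?_, by simp [hQ], u, v, Q, rfl, hc1.1, hc1.2⟩
      conv_lhs => rw [hstate]
      by_cases hc2 : v ∈ touched x (bRun G A x t).2
      · simp only [bStep, if_pos hc1, if_pos hc2]
        exact Finset.card_insert_of_notMem hc1.2
      · simp only [bStep, if_pos hc1, if_neg hc2]
        exact Finset.card_insert_of_notMem hc1.2
    · left
      conv_lhs => rw [hstate]
      simp only [bStep, if_neg hc1]

/-- any accepting step happens strictly before time `n * Δ`. -/
lemma accept_lt (A : Finset (Sym2 V)) (x : V) {n Δ : ℕ} (hn : 1 ≤ n) (hΔ : 1 ≤ Δ)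
    (hdeg : ∀ v, G.degree v ≤ Δ) (hcard : A.card = n) {t : ℕ}
    (hacc : (bRun G A x (t+1)).2 ≠ (bRun G A x t).2) : t < n * Δ := by
  rcases bRun_acc_cases (G := G) A x t with h | ⟨-, hne, u, v, Q, hQ, hmem, hnmem⟩
  · exact absurd h hacc
  have hinv := bInv_run A x Δ hdeg t
  obtain ⟨hsub, -, -, hcount⟩ := hinv
  have hc := hcount hne
  rw [hQ] at hc
  simp only [List.length_cons] at hc
  have hssub : (bRun G A x t).2 ⊂ A := ⟨hsub, fun h => hnmem (h hmem)⟩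
  have hlt : (bRun G A x t).2.card < n := by
    rw [← hcard]; exact Finset.card_lt_card hssub
  have h1 : (bRun G A x t).2.card * (Δ - 1) ≤ (n - 1) * (Δ - 1) :=
    Nat.mul_le_mul_right _ (by omega)
  have h2 : Δ + (n - 1) * (Δ - 1) ≤ n * Δ := by
    obtain ⟨d, rfl⟩ : ∃ d, Δ = d + 1 := ⟨Δ - 1, by omega⟩
    obtain ⟨m, rfl⟩ : ∃ m, n = m + 1 := ⟨n - 1, by omega⟩
    simp only [Nat.add_sub_cancel]
    ring_nf
    nlinarith
  omega

/-- by time `n * Δ + Δ`, the queue is empty. -/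
lemma queue_empty (A : Finset (Sym2 V)) (x : V) {n Δ : ℕ} (hΔ : 1 ≤ Δ)
    (hdeg : ∀ v, G.degree v ≤ Δ) (hcard : A.card = n) :
    (bRun G A x (n * Δ + Δ)).1 = [] := by
  by_contra hne
  obtain ⟨hsub, -, -, hcount⟩ := bInv_run A x Δ hdeg (n * Δ + Δ)
  have hc := hcount hne
  have hlen : 1 ≤ (bRun G A x (n * Δ + Δ)).1.length := List.length_pos_iff.2 hne
  have hcard' : (bRun G A x (n * Δ + Δ)).2.card ≤ n :=
    le_of_le_of_eq (Finset.card_le_card hsub) hcard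
  have h1 : (bRun G A x (n * Δ + Δ)).2.card * (Δ - 1) ≤ n * Δ :=
    le_trans (Nat.mul_le_mul hcard' (Nat.sub_le _ _)) le_rfl
  omega

/-- once the queue is empty, the accepted set is all of `A`. -/
lemma acc_eq_A (H : G.Subgraph) (hH : H.Connected) (x : V) (hx : x ∈ H.verts)
    (A : Finset (Sym2 V)) (hA : ∀ e, e ∈ A ↔ e ∈ H.edgeSet) {Δ : ℕ}
    (hdeg : ∀ v, G.degree v ≤ Δ) {t : ℕ}
    (hq : (bRun G A x t).1 = []) : (bRun G A x t).2 = A := by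
  obtain ⟨hsub, -, hJ, -⟩ := bInv_run A x Δ hdeg t
  refine Finset.Subset.antisymm hsub ?_
  have hclosed : ∀ a w : V, a ∈ touched x (bRun G A x t).2 → G.Adj a w → s(a,w) ∈ A →
      s(a,w) ∈ (bRun G A x t).2 := by
    intro a w ha hadj hmem
    rcases hJ a ha w hadj hmem with h | h | h
    · exact h
    · rw [hq] at h; simp at h
    · rw [hq] at h; simp at h
  have key : ∀ (a b : H.verts), H.coe.Walk a b →
      a.1 ∈ touched x (bRun G A x t).2 → b.1 ∈ touched x (bRun G A x t).2 := by
    intro a b w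
    induction w with
    | nil => exact id
    | @cons a c b hac p ih =>
      intro hxin
      apply ih
      have hHadj : H.Adj a.1 c.1 := hac
      have hedge : s(a.1, c.1) ∈ A := (hA _).2 (SimpleGraph.Subgraph.mem_edgeSet.2 hHadj)
      have := hclosed a.1 c.1 hxin hHadj.adj_sub hedge
      exact mem_touched_of_mem this (Sym2.mem_mk_right _ _)
  have hverts : ∀ v ∈ H.verts, v ∈ touched x (bRun G A x t).2 := by
    intro v hv
    have hreach : H.coe.Reachable ⟨x, hx⟩ ⟨v, hv⟩ := hH.preconnected ⟨x, hx⟩ ⟨v, hv⟩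
    refine hreach.elim fun w => ?_
    exact key _ _ w (by simp [touched])
  intro e he
  induction e with
  | _ a b =>
    have hHadj : H.Adj a b := SimpleGraph.Subgraph.mem_edgeSet.1 ((hA _).1 he)
    have haverts : a ∈ H.verts := hHadj.fst_mem
    exact hclosed a b (hverts a haverts) hHadj.adj_sub he

/-- the encoding: the set of times at which an edge is accepted. -/
def bCode (G : SimpleGraph V) [DecidableRel G.Adj] (A : Finset (Sym2 V)) (x : V)
    (n Δ : ℕ) : Finset ℕ :=
  (Finset.range (n * Δ)).filter (fun t => (bRun G A x (t+1)).2 ≠ (bRun G A x t).2)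

lemma bCode_card_aux (A : Finset (Sym2 V)) (x : V) (T : ℕ) :
    ((Finset.range T).filter
        (fun t => (bRun G A x (t+1)).2 ≠ (bRun G A x t).2)).card
      = (bRun G A x T).2.card := by
  induction T with
  | zero => simp [bRun]; rfl
  | succ T ih =>
    rw [Finset.range_add_one, Finset.filter_insert]
    rcases bRun_acc_cases (G := G) A x T with h | ⟨hc, -⟩
    · rw [if_neg (by simp [h]), ih, h]
    · rw [if_pos (fun heq => by simp [heq] at hc),
        Finset.card_insert_of_notMem (by simp), ih, hc]

lemma acc_stable (A : Finset (Sym2 V)) (x : V) {n Δ : ℕ} (hn : 1 ≤ n) (hΔ : 1 ≤ Δ)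
    (hdeg : ∀ v, G.degree v ≤ Δ) (hcard : A.card = n) (k : ℕ) :
    (bRun G A x (n * Δ + k)).2 = (bRun G A x (n * Δ)).2 := by
  induction k with
  | zero => rfl
  | succ k ih =>
    rw [← Nat.add_assoc]
    rcases eq_or_ne (bRun G A x (n * Δ + k + 1)).2 (bRun G A x (n * Δ + k)).2 with h | h
    · rw [h, ih]
    · exact absurd (accept_lt A x hn hΔ hdeg hcard h) (by omega)

lemma bCode_card (A : Finset (Sym2 V)) (x : V) {n Δ : ℕ} (hn : 1 ≤ n) (hΔ : 1 ≤ Δ)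
    (hdeg : ∀ v, G.degree v ≤ Δ) (hcard : A.card = n)
    (H : G.Subgraph) (hH : H.Connected) (hx : x ∈ H.verts)
    (hA : ∀ e, e ∈ A ↔ e ∈ H.edgeSet) :
    (bCode G A x n Δ).card = n := by
  have h1 : (bCode G A x n Δ).card = (bRun G A x (n * Δ)).2.card :=
    bCode_card_aux A x (n * Δ)
  have h2 : (bRun G A x (n * Δ + Δ)).2 = A :=
    acc_eq_A H hH x hx A hA hdeg (queue_empty A x hΔ hdeg hcard)
  rw [h1, ← acc_stable A x hn hΔ hdeg hcard Δ, h2, hcard]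

lemma accAt_iff (A : Finset (Sym2 V)) (x : V) (t : ℕ) {u v : V} {Q : List (V × V)}
    (hQ : (bRun G A x t).1 = (u,v) :: Q) :
    (bRun G A x (t+1)).2 ≠ (bRun G A x t).2 ↔
      (s(u,v) ∈ A ∧ s(u,v) ∉ (bRun G A x t).2) := by
  constructor
  · intro hne
    rcases bRun_acc_cases (G := G) A x t with h | ⟨-, -, u', v', Q', hQ', hmem, hnmem⟩
    · exact absurd h hne
    · rw [hQ] at hQ'
      obtain ⟨h1, h2⟩ : (u, v) = (u', v') ∧ Q = Q' := by
        constructor <;> [exact (List.cons.injEq .. ▸ hQ').1; exact (List.cons.injEq .. ▸ hQ').2]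
      obtain ⟨rfl, rfl⟩ : u = u' ∧ v = v' :=
        ⟨congrArg Prod.fst h1, congrArg Prod.snd h1⟩
      exact ⟨hmem, hnmem⟩
  · intro hc1
    have hstate : bRun G A x t = ((u, v) :: Q, (bRun G A x t).2) := by
      cases hh : bRun G A x t; simp_all
    rw [bRun_succ]
    conv_lhs => rw [hstate]
    by_cases hc2 : v ∈ touched x (bRun G A x t).2
    · simp only [bStep, if_pos hc1, if_pos hc2]
      exact fun h => hc1.2 (h ▸ Finset.mem_insert_self _ _)
    · simp only [bStep, if_pos hc1, if_neg hc2]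
      exact fun h => hc1.2 (h ▸ Finset.mem_insert_self _ _)

lemma run_eq_of_code_eq (A A' : Finset (Sym2 V)) (x : V) {n Δ : ℕ} (hn : 1 ≤ n)
    (hΔ : 1 ≤ Δ) (hdeg : ∀ v, G.degree v ≤ Δ) (hA : A.card = n) (hA' : A'.card = n)
    (hcode : bCode G A x n Δ = bCode G A' x n Δ) (t : ℕ) :
    bRun G A x t = bRun G A' x t := by
  induction t with
  | zero => rfl
  | succ t ih =>
    rw [bRun_succ, bRun_succ, ← ih]
    rcases hQ : (bRun G A x t).1 with _ | ⟨⟨u, v⟩, Q⟩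
    · have hstate : bRun G A x t = ([], (bRun G A x t).2) := Prod.ext hQ rfl
      rw [hstate]
      rfl
    · have hstate : bRun G A x t = ((u, v) :: Q, (bRun G A x t).2) := Prod.ext hQ rfl
      have hQ' : (bRun G A' x t).1 = (u,v) :: Q := by rw [← ih, hQ]
      have hacc' : (bRun G A' x t).2 = (bRun G A x t).2 := by rw [← ih]
      have e1 := accAt_iff A x t hQ
      have e2 := accAt_iff A' x t hQ'
      have hiff : (s(u,v) ∈ A ∧ s(u,v) ∉ (bRun G A x t).2) ↔
          (s(u,v) ∈ A' ∧ s(u,v) ∉ (bRun G A x t).2) := by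
        constructor
        · intro hcond
          have hne : (bRun G A x (t+1)).2 ≠ (bRun G A x t).2 := e1.2 hcond
          have ht : t < n * Δ := accept_lt A x hn hΔ hdeg hA hne
          have hmem : t ∈ bCode G A x n Δ :=
            Finset.mem_filter.2 ⟨Finset.mem_range.2 ht, hne⟩
          rw [hcode] at hmem
          have hcond' := e2.1 (Finset.mem_filter.1 hmem).2
          rw [hacc'] at hcond'
          exact hcond'
        · intro hcond
          have hcondp : s(u,v) ∈ A' ∧ s(u,v) ∉ (bRun G A' x t).2 := by
            rw [hacc']; exact hcond
          have hne : (bRun G A' x (t+1)).2 ≠ (bRun G A' x t).2 := e2.2 hcondp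
          have ht : t < n * Δ := accept_lt A' x hn hΔ hdeg hA' hne
          have hmem : t ∈ bCode G A' x n Δ :=
            Finset.mem_filter.2 ⟨Finset.mem_range.2 ht, hne⟩
          rw [← hcode] at hmem
          exact e1.1 (Finset.mem_filter.1 hmem).2
      conv_lhs => rw [hstate]
      conv_rhs => rw [hstate]
      by_cases hc1 : s(u,v) ∈ A ∧ s(u,v) ∉ (bRun G A x t).2
      · simp only [bStep, if_pos hc1, if_pos (hiff.1 hc1)]
      · simp only [bStep, if_neg hc1, if_neg (fun h => hc1 (hiff.2 h))]

lemma code_injective (A A' : Finset (Sym2 V)) (x : V) {n Δ : ℕ} (hn : 1 ≤ n)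
    (hΔ : 1 ≤ Δ) (hdeg : ∀ v, G.degree v ≤ Δ) (hA : A.card = n) (hA' : A'.card = n)
    (H H' : G.Subgraph) (hH : H.Connected) (hH' : H'.Connected)
    (hx : x ∈ H.verts) (hx' : x ∈ H'.verts)
    (heA : ∀ e, e ∈ A ↔ e ∈ H.edgeSet) (heA' : ∀ e, e ∈ A' ↔ e ∈ H'.edgeSet)
    (hcode : bCode G A x n Δ = bCode G A' x n Δ) : A = A' := by
  have h1 : (bRun G A x (n * Δ + Δ)).2 = A :=
    acc_eq_A H hH x hx A heA hdeg (queue_empty A x hΔ hdeg hA)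
  have h2 : (bRun G A' x (n * Δ + Δ)).2 = A' :=
    acc_eq_A H' hH' x hx' A' heA' hdeg (queue_empty A' x hΔ hdeg hA')
  rw [← h1, ← h2, run_eq_of_code_eq A A' x hn hΔ hdeg hA hA' hcode]

lemma factorial_bound (n : ℕ) (hn : 1 ≤ n) :
    (n : ℝ) ^ n * Real.exp 1 ≤ Real.exp 1 ^ n * n.factorial := by
  induction n, hn using Nat.le_induction with
  | base => simp [Nat.factorial]
  | succ n hn ih =>
    have hnpos : (0:ℝ) < n := by exact_mod_cast hn
    have key : ((n:ℝ) + 1) ^ n ≤ Real.exp 1 * (n:ℝ) ^ n := by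
      have h1 : (1 : ℝ) + 1/n ≤ Real.exp (1/n) := by
        have := Real.add_one_le_exp (1/(n:ℝ))
        linarith
      have h2 : ((1:ℝ) + 1/n) ^ n ≤ Real.exp (1/n) ^ n :=
        pow_le_pow_left₀ (by positivity) h1 n
      have h3 : Real.exp (1/(n:ℝ)) ^ n = Real.exp 1 := by
        rw [← Real.exp_nat_mul]
        congr 1
        field_simp
      have h4 : ((n:ℝ) + 1) ^ n = (n:ℝ) ^ n * ((1:ℝ) + 1/n) ^ n := by
        rw [← mul_pow]
        congr 1
        field_simp
      rw [h4]
      calc (n:ℝ) ^ n * ((1:ℝ) + 1/n) ^ n ≤ (n:ℝ) ^ n * Real.exp 1 := by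
            rw [← h3]
            exact mul_le_mul_of_nonneg_left h2 (by positivity)
        _ = Real.exp 1 * (n:ℝ) ^ n := mul_comm _ _
    have hepos : (0:ℝ) < Real.exp 1 := Real.exp_pos 1
    have hfact : ((n+1 : ℕ).factorial : ℝ) = ((n:ℝ) + 1) * n.factorial := by
      rw [Nat.factorial_succ]
      push_cast
      ring
    push_cast
    calc ((n:ℝ) + 1) ^ (n + 1) * Real.exp 1
        = ((n:ℝ) + 1) * (((n:ℝ) + 1) ^ n * Real.exp 1) := by ring
      _ ≤ ((n:ℝ) + 1) * ((Real.exp 1 * (n:ℝ) ^ n) * Real.exp 1) := by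
          apply mul_le_mul_of_nonneg_left _ (by positivity)
          exact mul_le_mul_of_nonneg_right key hepos.le
      _ = Real.exp 1 * ((n:ℝ) ^ n * Real.exp 1) * ((n:ℝ) + 1) := by ring
      _ ≤ Real.exp 1 * (Real.exp 1 ^ n * n.factorial) * ((n:ℝ) + 1) := by
          apply mul_le_mul_of_nonneg_right _ (by positivity)
          exact mul_le_mul_of_nonneg_left ih hepos.le
      _ = Real.exp 1 ^ (n+1) * (((n:ℝ) + 1) * n.factorial) := by ring
      _ = Real.exp 1 ^ (n+1) * ((n+1 : ℕ).factorial : ℝ) := by rw [hfact]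

lemma choose_bound (n Δ : ℕ) (hn : 1 ≤ n) (hΔ : 1 ≤ Δ) :
    (((n * Δ).choose n : ℕ) : ℝ) ≤ (Real.exp 1 * Δ) ^ n / 2 := by
  have hfpos : (0:ℝ) < n.factorial := by exact_mod_cast n.factorial_pos
  have hepos : (0:ℝ) < Real.exp 1 := Real.exp_pos 1
  have h2e : (2:ℝ) ≤ Real.exp 1 := by
    have := Real.add_one_le_exp (1:ℝ)
    linarith
  have h1 : (((n * Δ).choose n : ℕ) : ℝ) ≤ ((n * Δ : ℕ) : ℝ) ^ n / n.factorial :=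
    Nat.choose_le_pow_div n (n * Δ)
  have h2 : ((n:ℝ) ^ n) / n.factorial ≤ Real.exp 1 ^ n / Real.exp 1 := by
    rw [div_le_div_iff₀ hfpos hepos]
    exact factorial_bound n hn
  calc (((n * Δ).choose n : ℕ) : ℝ)
      ≤ ((n * Δ : ℕ) : ℝ) ^ n / n.factorial := h1
    _ = (Δ:ℝ) ^ n * ((n:ℝ) ^ n / n.factorial) := by
        push_cast
        rw [mul_pow]
        ring
    _ ≤ (Δ:ℝ) ^ n * (Real.exp 1 ^ n / Real.exp 1) :=
        mul_le_mul_of_nonneg_left h2 (by positivity)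
    _ ≤ (Δ:ℝ) ^ n * (Real.exp 1 ^ n / 2) := by
        apply mul_le_mul_of_nonneg_left _ (by positivity)
        apply div_le_div_of_nonneg_left (by positivity) (by norm_num) h2e
    _ = (Real.exp 1 * Δ) ^ n / 2 := by
        rw [mul_pow]
        ring


end


/-- Borgs–Chayes–Kahn–Lovász: in a graph of maximum degree at most Δ, the number of
connected subgraphs with exactly n edges (counted by their edge sets, i.e. subgraphs
without isolated vertices) containing a fixed vertex x is at most (eΔ)^n / 2. -/
theorem card_connected_subgraphs_le (V : Type*) [Fintype V] (G : SimpleGraph V)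
    [DecidableRel G.Adj] (Δ : ℕ) (hΔ : 1 ≤ Δ) (hdeg : ∀ v, G.degree v ≤ Δ)
    (x : V) (n : ℕ) (hn : 1 ≤ n) :
    ({H : G.Subgraph | H.Connected ∧ x ∈ H.verts ∧ H.edgeSet.ncard = n ∧
        H.verts = H.support}.ncard : ℝ) ≤ (Real.exp 1 * Δ) ^ n / 2 := by
  letI : LinearOrder V := LinearOrder.lift' (Fintype.equivFin V) (Equiv.injective _)
  letI : DecidableEq V := inferInstance
  set S := {H : G.Subgraph | H.Connected ∧ x ∈ H.verts ∧ H.edgeSet.ncard = n ∧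
      H.verts = H.support} with hS
  have hfin : ∀ H : G.Subgraph, H.edgeSet.Finite := fun H => Set.toFinite _
  set f : G.Subgraph → Finset ℕ :=
    fun H => bCode G ((hfin H).toFinset) x n Δ with hf
  have hAcard : ∀ H ∈ S, ((hfin H).toFinset).card = n := by
    intro H hH
    rw [← Set.ncard_eq_toFinset_card _ (hfin H)]
    exact hH.2.2.1
  have hAmem : ∀ (H : G.Subgraph) (e : Sym2 V),
      e ∈ (hfin H).toFinset ↔ e ∈ H.edgeSet := by
    intro H e
    exact Set.Finite.mem_toFinset _
  have key : S.ncard ≤ ((Finset.range (n * Δ)).powersetCard n).card := by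
    rw [← Set.ncard_coe_finset]
    refine Set.ncard_le_ncard_of_injOn f ?_ ?_ (Finset.finite_toSet _)
    · intro H hH
      refine Finset.mem_coe.2 (Finset.mem_powersetCard.2 ⟨Finset.filter_subset _ _, ?_⟩)
      exact bCode_card _ x hn hΔ hdeg (hAcard H hH) H hH.1 hH.2.1 (hAmem H)
    · intro H1 h1 H2 h2 hfeq
      have hAeq : (hfin H1).toFinset = (hfin H2).toFinset :=
        code_injective _ _ x hn hΔ hdeg (hAcard H1 h1) (hAcard H2 h2)
          H1 H2 h1.1 h2.1 h1.2.1 h2.2.1 (hAmem H1) (hAmem H2) hfeq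
      have hedge : H1.edgeSet = H2.edgeSet := by
        rw [← Set.Finite.coe_toFinset (hfin H1), ← Set.Finite.coe_toFinset (hfin H2), hAeq]
      have hadj : H1.Adj = H2.Adj := by
        ext a b
        rw [← SimpleGraph.Subgraph.mem_edgeSet, ← SimpleGraph.Subgraph.mem_edgeSet, hedge]
      have hverts : H1.verts = H2.verts := by
        rw [h1.2.2.2, h2.2.2.2]
        ext v
        rw [SimpleGraph.Subgraph.mem_support, SimpleGraph.Subgraph.mem_support, hadj]
      exact SimpleGraph.Subgraph.ext hverts hadj
  have hcard : ((Finset.range (n * Δ)).powersetCard n).card = (n * Δ).choose n := by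
    rw [Finset.card_powersetCard, Finset.card_range]
  calc (S.ncard : ℝ) ≤ (((n * Δ).choose n : ℕ) : ℝ) := by
        exact_mod_cast (hcard ▸ key)
    _ ≤ (Real.exp 1 * Δ) ^ n / 2 := choose_bound n Δ hn hΔ
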